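/- Fix α > 0 and 0 < c < log₂(1 + tanh 2), and define the recursion V_1 = 1, V_{n+1} = (1 + tanh(min(α·2^{−cn}·V_n, 2)))·V_n for n ≥ 1. If α > α_*(c) := 2^c · arctanh(2^c − 1), then V_n → ∞ as n → ∞; moreover there is a constant C > 0 such that V_n ≥ C·(1 + tanh 2)^n for all sufficiently large n. -/

import Mathlib

open Filter

/-- The inverse hyperbolic tangent. -/
noncomputable def arctanh (x : ℝ) : ℝ := (1 / 2) * Real.log ((1 + x) / (1 - x))

lemma my_tanh_eq (x : ℝ) :
    Real.tanh x = (Real.exp (2*x) - 1) / (Real.exp (2*x) + 1) := by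
  have he : Real.exp (2*x) = Real.exp x * Real.exp x := by
    rw [two_mul, Real.exp_add]
  have hx := Real.exp_pos x
  have hd : (0:ℝ) < Real.exp x + Real.exp (-x) := by positivity
  rw [Real.tanh_eq_sinh_div_cosh, Real.sinh_eq, Real.cosh_eq, Real.exp_neg]
  rw [div_eq_div_iff (by positivity) (by positivity)]
  field_simp [he]
  rw [he]; ring

lemma my_tanh_lt_one (x : ℝ) : Real.tanh x < 1 := by
  rw [my_tanh_eq]
  have := Real.exp_pos (2*x)
  rw [div_lt_one (by linarith)]; linarith

lemma my_neg_one_lt_tanh (x : ℝ) : -1 < Real.tanh x := by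
  rw [my_tanh_eq]
  have := Real.exp_pos (2*x)
  rw [lt_div_iff₀ (by linarith)]; linarith

lemma my_tanh_lt_tanh {a b : ℝ} (h : a < b) : Real.tanh a < Real.tanh b := by
  rw [my_tanh_eq, my_tanh_eq]
  have ha := Real.exp_pos (2*a)
  have hb := Real.exp_pos (2*b)
  have hab : Real.exp (2*a) < Real.exp (2*b) := Real.exp_lt_exp.2 (by linarith)
  rw [div_lt_div_iff₀ (by linarith) (by linarith)]
  nlinarith

lemma my_tanh_le_tanh {a b : ℝ} (h : a ≤ b) : Real.tanh a ≤ Real.tanh b := by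
  rcases eq_or_lt_of_le h with rfl | h
  · exact le_refl _
  · exact (my_tanh_lt_tanh h).le

lemma my_tanh_pos : 0 < Real.tanh 2 := by
  have := my_tanh_lt_tanh (show (0:ℝ) < 2 by norm_num)
  simpa [Real.tanh_zero] using this

lemma my_tanh_arctanh {y : ℝ} (h1 : -1 < y) (h2 : y < 1) :
    Real.tanh (arctanh y) = y := by
  have hr : (0:ℝ) < (1 + y) / (1 - y) := by
    apply div_pos <;> linarith
  have he : Real.exp (2 * arctanh y) = (1 + y) / (1 - y) := by
    rw [arctanh]
    rw [show 2 * ((1:ℝ)/2 * Real.log ((1+y)/(1-y))) = Real.log ((1+y)/(1-y)) by ring]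
    exact Real.exp_log hr
  rw [my_tanh_eq, he]
  have h1y : (1:ℝ) - y ≠ 0 := by linarith
  field_simp
  ring

/-- **Lemma (growth of the recursive variance).**
Fix `α > 0` and `0 < c < log₂(1 + tanh 2)`, and let `V_1 = 1`,
`V_{n+1} = (1 + tanh(min(α 2^{−cn} V_n, 2))) V_n` for `n ≥ 1`.
If `α > α_*(c) = 2^c arctanh(2^c − 1)`, then `V_n → ∞`; moreover there is `C > 0` with
`V_n ≥ C (1 + tanh 2)^n` for all large `n`. -/
theorem recursive_variance_growth
    (α c : ℝ) (hα : 0 < α) (hc : 0 < c) (hccrit : c < Real.logb 2 (1 + Real.tanh 2))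
    (hαstar : (2 : ℝ) ^ c * arctanh ((2 : ℝ) ^ c - 1) < α)
    (V : ℕ → ℝ) (hV1 : V 1 = 1)
    (hrec : ∀ n : ℕ, 1 ≤ n →
      V (n + 1) = (1 + Real.tanh (min (α * (2 : ℝ) ^ (-(c * n)) * V n) 2)) * V n) :
    Tendsto V atTop atTop ∧
      ∃ C > (0 : ℝ), ∀ᶠ n in atTop, C * (1 + Real.tanh 2) ^ n ≤ V n := by
  have ht0 : 0 < Real.tanh 2 := my_tanh_pos
  have ht1 : Real.tanh 2 < 1 := my_tanh_lt_one 2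
  have h1t : 1 < 1 + Real.tanh 2 := by linarith
  have h2cpos : ∀ y : ℝ, (0:ℝ) < (2:ℝ) ^ y := fun y => Real.rpow_pos_of_pos two_pos y
  have h2c1 : (2:ℝ) ^ c < 1 + Real.tanh 2 := by
    have := (Real.rpow_lt_rpow_left_iff (x := (2:ℝ)) one_lt_two).2 hccrit
    rwa [Real.rpow_logb two_pos (by norm_num) (by linarith)] at this
  have hone2c : (1:ℝ) < (2:ℝ) ^ c := by
    have := (Real.rpow_lt_rpow_left_iff (x := (2:ℝ)) one_lt_two).2 hc
    rwa [Real.rpow_zero] at this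
  have hinv : (2:ℝ) ^ (-c) * (2:ℝ) ^ c = 1 := by
    rw [← Real.rpow_add two_pos]; simp
  -- positivity of V
  have hVpos : ∀ n : ℕ, 1 ≤ n → 0 < V n := by
    intro n hn
    induction n, hn using Nat.le_induction with
    | base => rw [hV1]; norm_num
    | succ n hn ih =>
      rw [hrec n hn]
      have := my_neg_one_lt_tanh (min (α * (2:ℝ) ^ (-(c * n)) * V n) 2)
      exact mul_pos (by linarith) ih
  -- abbreviation
  set x : ℕ → ℝ := fun n => α * (2:ℝ) ^ (-(c * (n:ℝ))) * V n with hxdef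
  have hxpos : ∀ n : ℕ, 1 ≤ n → 0 < x n := fun n hn =>
    mul_pos (mul_pos hα (h2cpos _)) (hVpos n hn)
  have hxrec : ∀ n : ℕ, 1 ≤ n →
      x (n + 1) = (2:ℝ) ^ (-c) * (1 + Real.tanh (min (x n) 2)) * x n := by
    intro n hn
    have hcast : (((n:ℕ) + 1 : ℕ) : ℝ) = (n:ℝ) + 1 := by push_cast; ring
    simp only [hxdef, hrec n hn, hcast]
    rw [show -(c * ((n:ℝ) + 1)) = -c + -(c * n) by ring, Real.rpow_add two_pos]
    ring
  have hx1 : x 1 = α * (2:ℝ) ^ (-c) := by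
    simp only [hxdef, hV1]
    norm_num
  have hx1pos : 0 < x 1 := hxpos 1 le_rfl
  -- x 1 is above the fixed point
  have hx1star : arctanh ((2:ℝ) ^ c - 1) < x 1 := by
    rw [hx1]
    have h := mul_lt_mul_of_pos_left hαstar (h2cpos (-c))
    calc arctanh ((2:ℝ) ^ c - 1)
        = (2:ℝ) ^ (-c) * ((2:ℝ) ^ c * arctanh ((2:ℝ) ^ c - 1)) := by
          rw [← mul_assoc, hinv, one_mul]
      _ < (2:ℝ) ^ (-c) * α := h
      _ = α * (2:ℝ) ^ (-c) := mul_comm _ _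
  set ρ : ℝ := (2:ℝ) ^ (-c) * (1 + Real.tanh (min (x 1) 2)) with hρdef
  have hρ : 1 < ρ := by
    have hkey : (2:ℝ) ^ c < 1 + Real.tanh (min (x 1) 2) := by
      rcases le_or_gt 2 (x 1) with h | h
      · rw [min_eq_right h]; exact h2c1
      · rw [min_eq_left h.le]
        have harg : -1 < (2:ℝ) ^ c - 1 := by linarith
        have harg2 : (2:ℝ) ^ c - 1 < 1 := by linarith
        have := my_tanh_lt_tanh hx1star
        rw [my_tanh_arctanh harg harg2] at this
        linarith
    calc (1:ℝ) = (2:ℝ) ^ (-c) * (2:ℝ) ^ c := hinv.symm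
      _ < ρ := by
          rw [hρdef]
          exact mul_lt_mul_of_pos_left hkey (h2cpos (-c))
  -- growth of x
  have hgrow : ∀ k : ℕ, x 1 * ρ ^ k ≤ x (k + 1) := by
    intro k
    induction k with
    | zero => simp
    | succ k ih =>
      have hk1 : 1 ≤ k + 1 := le_add_self
      have hxk : x 1 ≤ x (k + 1) := by
        calc x 1 = x 1 * 1 := (mul_one _).symm
          _ ≤ x 1 * ρ ^ k := by
              exact mul_le_mul_of_nonneg_left (one_le_pow₀ hρ.le) hx1pos.le
          _ ≤ x (k + 1) := ih
      have hmin : min (x 1) 2 ≤ min (x (k + 1)) 2 := min_le_min hxk le_rfl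
      have htanh := my_tanh_le_tanh hmin
      have hfac : ρ ≤ (2:ℝ) ^ (-c) * (1 + Real.tanh (min (x (k + 1)) 2)) := by
        rw [hρdef]
        exact mul_le_mul_of_nonneg_left (by linarith) (h2cpos _).le
      calc x 1 * ρ ^ (k + 1) = ρ * (x 1 * ρ ^ k) := by ring
        _ ≤ ρ * x (k + 1) := mul_le_mul_of_nonneg_left ih (by linarith)
        _ ≤ ((2:ℝ) ^ (-c) * (1 + Real.tanh (min (x (k + 1)) 2))) * x (k + 1) :=
            mul_le_mul_of_nonneg_right hfac (hxpos _ hk1).le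
        _ = x (k + 1 + 1) := (hxrec (k + 1) hk1).symm
  -- find N with x N ≥ 2
  obtain ⟨k, hk⟩ := pow_unbounded_of_one_lt (2 / x 1) hρ
  have hN2 : 2 ≤ x (k + 1) := by
    have : 2 < x 1 * ρ ^ k := by
      rw [div_lt_iff₀ hx1pos] at hk
      linarith [hk]
    linarith [hgrow k]
  set N := k + 1 with hNdef
  have hN1 : 1 ≤ N := le_add_self
  -- x stays ≥ 2
  have hge2 : ∀ n : ℕ, N ≤ n → 2 ≤ x n := by
    intro n hn
    induction n, hn using Nat.le_induction with
    | base => exact hN2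
    | succ n hn ih =>
      have hn1 : 1 ≤ n := le_trans hN1 hn
      rw [hxrec n hn1, min_eq_right ih]
      have hfac1 : (1:ℝ) ≤ (2:ℝ) ^ (-c) * (1 + Real.tanh 2) := by
        calc (1:ℝ) = (2:ℝ) ^ (-c) * (2:ℝ) ^ c := hinv.symm
          _ ≤ (2:ℝ) ^ (-c) * (1 + Real.tanh 2) :=
              mul_le_mul_of_nonneg_left h2c1.le (h2cpos _).le
      nlinarith [hxpos n hn1]
  -- V recursion in the saturated regime
  have hVrec2 : ∀ n : ℕ, N ≤ n → V (n + 1) = (1 + Real.tanh 2) * V n := by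
    intro n hn
    have hn1 : 1 ≤ n := le_trans hN1 hn
    rw [hrec n hn1, min_eq_right (hge2 n hn)]
  set C : ℝ := V N / (1 + Real.tanh 2) ^ N with hCdef
  have hpowpos : ∀ m : ℕ, (0:ℝ) < (1 + Real.tanh 2) ^ m :=
    fun m => pow_pos (by linarith) m
  have hCpos : 0 < C := div_pos (hVpos N hN1) (hpowpos N)
  have hbound : ∀ n : ℕ, N ≤ n → C * (1 + Real.tanh 2) ^ n ≤ V n := by
    intro n hn
    induction n, hn using Nat.le_induction with
    | base =>
      rw [hCdef, div_mul_cancel₀]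
      exact (hpowpos N).ne'
    | succ n hn ih =>
      rw [hVrec2 n hn, pow_succ]
      calc C * ((1 + Real.tanh 2) ^ n * (1 + Real.tanh 2))
          = (1 + Real.tanh 2) * (C * (1 + Real.tanh 2) ^ n) := by ring
        _ ≤ (1 + Real.tanh 2) * V n := mul_le_mul_of_nonneg_left ih (by linarith)
  constructor
  · exact Filter.tendsto_atTop_mono' Filter.atTop
      (Filter.eventually_atTop.2 ⟨N, hbound⟩)
      ((tendsto_pow_atTop_atTop_of_one_lt h1t).const_mul_atTop hCpos)
  · exact ⟨C, hCpos, Filter.eventually_atTop.2 ⟨N, hbound⟩⟩
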